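/- Let A ∈ ℝ^{m×n}, b ∈ ℝ^m, λ > 0, and let x ∈ ℝ^n be a point where the slack s(x) := Ax − b has all entries strictly positive. Write S_x := diag(s(x)), A_x := S_x⁻¹A, ψ_i(x) := [A_x(A_xᵀA_x + λI)⁻¹A_xᵀ]_{ii}, and Ψ(x) := diag(ψ(x)). Then the second derivative of f(x) := ½·log det(AᵀS_x⁻²A + λI) at x, viewed as a quadratic form, satisfies hᵀ(A_xᵀΨ(x)A_x)h ≤ D²f(x)[h,h] ≤ 3·hᵀ(A_xᵀΨ(x)A_x)h for every direction h ∈ ℝ^n; equivalently A_xᵀΨ(x)A_x ⪯ ∇²f(x) ⪯ 3·A_xᵀΨ(x)A_x in the Loewner order. -/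

import Mathlib

open Matrix
open Finset

/-- The slack-rescaled constraint matrix `A_x = S_x⁻¹ A` where `S_x = diag(Ax − b)`. -/
noncomputable def Amat {m n : ℕ} (A : Matrix (Fin m) (Fin n) ℝ) (b : Fin m → ℝ)
    (y : Fin n → ℝ) : Matrix (Fin m) (Fin n) ℝ :=
  (Matrix.diagonal (A.mulVec y - b))⁻¹ * A

/-- The regularized leverage scores `ψᵢ(x) = [A_x(A_xᵀA_x + λI)⁻¹A_xᵀ]_{ii}`. -/
noncomputable def psiReg {m n : ℕ} (A : Matrix (Fin m) (Fin n) ℝ) (b : Fin m → ℝ)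
    (lam : ℝ) (y : Fin n → ℝ) : Fin m → ℝ :=
  fun i =>
    (Amat A b y *
      ((Amat A b y)ᵀ * Amat A b y + lam • (1 : Matrix (Fin n) (Fin n) ℝ))⁻¹ *
      (Amat A b y)ᵀ) i i

/-- The regularized volumetric barrier `f(x) = ½ log det(AᵀS_x⁻²A + λI)`. -/
noncomputable def volBarrier {m n : ℕ} (A : Matrix (Fin m) (Fin n) ℝ) (b : Fin m → ℝ)
    (lam : ℝ) (y : Fin n → ℝ) : ℝ :=
  (1 / 2) *
    Real.log (((Amat A b y)ᵀ * Amat A b y + lam • (1 : Matrix (Fin n) (Fin n) ℝ)).det)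

section Generic
variable {N : ℕ}

noncomputable def cdet (N : ℕ) : ContinuousMultilinearMap ℝ (fun _ : Fin N => (Fin N → ℝ)) ℝ :=
  MultilinearMap.mkContinuous
    (Matrix.detRowAlternating : (Fin N → ℝ) [⋀^Fin N]→ₗ[ℝ] ℝ).toMultilinearMap
    (N.factorial) (by
      intro v
      show ‖Matrix.det (Matrix.of v)‖ ≤ _
      rw [Matrix.det_apply']
      calc ‖∑ σ : Equiv.Perm (Fin N), ((Equiv.Perm.sign σ : ℤ) : ℝ) * ∏ i, Matrix.of v (σ i) i‖
          ≤ ∑ σ : Equiv.Perm (Fin N), ‖((Equiv.Perm.sign σ : ℤ) : ℝ) * ∏ i, Matrix.of v (σ i) i‖ :=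
            norm_sum_le _ _
        _ ≤ ∑ σ : Equiv.Perm (Fin N), ∏ i, ‖v i‖ := by
            refine Finset.sum_le_sum fun σ _ => ?_
            have hs : ‖((Equiv.Perm.sign σ : ℤ) : ℝ) * ∏ i, Matrix.of v (σ i) i‖
                = ‖∏ i, Matrix.of v (σ i) i‖ := by
              rcases Int.units_eq_one_or (Equiv.Perm.sign σ) with h | h <;> simp [h]
            rw [hs]
            have h3 : ∏ i, ‖v i‖ = ∏ i, ‖v (σ i)‖ := (Equiv.prod_comp σ (fun i => ‖v i‖)).symm
            rw [norm_prod, h3]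
            refine Finset.prod_le_prod (fun i _ => norm_nonneg _) (fun i _ => ?_)
            exact norm_le_pi_norm (v (σ i)) i
        _ = (N.factorial : ℝ) * ∏ i, ‖v i‖ := by
            rw [Finset.sum_const, card_univ]
            simp [Fintype.card_perm, nsmul_eq_mul])

lemma cdet_apply (v : Fin N → Fin N → ℝ) : cdet N v = Matrix.det (Matrix.of v) := rfl

lemma sum_det_updateRow (X H : Matrix (Fin N) (Fin N) ℝ) :
    (∑ k, Matrix.det (X.updateRow k (H k))) = Matrix.trace (X.adjugate * H) := by
  have h1 : ∀ k, Matrix.det (X.updateRow k (H k)) = ∑ j, X.adjugate j k * H k j := by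
    intro k
    have h2 : X.updateRow k (H k) = (Xᵀ.updateCol k (H k))ᵀ := by
      rw [Matrix.updateCol_transpose, Matrix.transpose_transpose]
    rw [h2, Matrix.det_transpose, ← Matrix.cramer_apply, Matrix.cramer_eq_adjugate_mulVec]
    rw [Matrix.mulVec, ← Matrix.adjugate_transpose]
    simp [dotProduct, Matrix.transpose_apply, mul_comm]
  simp only [h1, Matrix.trace, Matrix.diag, Matrix.mul_apply]
  rw [Finset.sum_comm]

lemma trace_transpose_mul_self_nonneg (X : Matrix (Fin N) (Fin N) ℝ) :
    0 ≤ Matrix.trace (Xᵀ * X) := by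
  simp only [Matrix.trace, Matrix.diag, Matrix.mul_apply, Matrix.transpose_apply]
  exact Finset.sum_nonneg fun j _ => Finset.sum_nonneg fun i _ => mul_self_nonneg _

lemma psd_trace_nonneg {M : Matrix (Fin N) (Fin N) ℝ} (hM : M.PosSemidef) :
    0 ≤ Matrix.trace M := by
  refine Finset.sum_nonneg fun i _ => ?_
  have := hM.diag_nonneg (i := i)
  simpa [dotProduct, Matrix.mulVec, Pi.single_apply, Finset.sum_ite_eq,
    Finset.sum_ite_eq'] using this

end Generic

section Setup
variable {m n : ℕ}

def slk (A : Matrix (Fin m) (Fin n) ℝ) (b : Fin m → ℝ) (y : Fin n → ℝ) : Fin m → ℝ :=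
  A.mulVec y - b

noncomputable def ddk (A : Matrix (Fin m) (Fin n) ℝ) (b : Fin m → ℝ) (y : Fin n → ℝ) :
    Fin m → ℝ := fun i => (slk A b y i)⁻¹

noncomputable def Mm (A : Matrix (Fin m) (Fin n) ℝ) (b : Fin m → ℝ) (lam : ℝ)
    (y : Fin n → ℝ) : Matrix (Fin n) (Fin n) ℝ :=
  Aᵀ * (Matrix.diagonal (fun i => ddk A b y i ^ 2) * A) + lam • 1

noncomputable def Nn (A : Matrix (Fin m) (Fin n) ℝ) (b : Fin m → ℝ) (lam : ℝ)
    (y : Fin n → ℝ) : Matrix (Fin n) (Fin n) ℝ := (Mm A b lam y)⁻¹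

noncomputable def FF (A : Matrix (Fin m) (Fin n) ℝ) (b : Fin m → ℝ) (lam : ℝ) :
    (Fin n → ℝ) → ℝ := fun y => (1 / 2) * Real.log (Mm A b lam y).det

noncomputable def Gg (A : Matrix (Fin m) (Fin n) ℝ) (b : Fin m → ℝ) (lam : ℝ)
    (y : Fin n → ℝ) : Matrix (Fin m) (Fin m) ℝ := A * Nn A b lam y * Aᵀ

noncomputable def cv (A : Matrix (Fin m) (Fin n) ℝ) (b : Fin m → ℝ) (lam : ℝ)
    (y : Fin n → ℝ) : Fin m → ℝ := fun i => -(ddk A b y i ^ 3) * Gg A b lam y i i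

noncomputable def uL (A : Matrix (Fin m) (Fin n) ℝ) (i : Fin m) : (Fin n → ℝ) →L[ℝ] ℝ :=
  LinearMap.toContinuousLinearMap
    { toFun := fun h => A.mulVec h i
      map_add' := fun a c => by simp [Matrix.mulVec_add]
      map_smul' := fun r a => by simp [Matrix.mulVec_smul] }

lemma uL_apply (A : Matrix (Fin m) (Fin n) ℝ) (i : Fin m) (h : Fin n → ℝ) :
    uL A i h = A.mulVec h i := rfl

noncomputable def Lc (A : Matrix (Fin m) (Fin n) ℝ) :
    (Fin m → ℝ) →L[ℝ] ((Fin n → ℝ) →L[ℝ] ℝ) :=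
  LinearMap.toContinuousLinearMap
    { toFun := fun w => LinearMap.toContinuousLinearMap
        { toFun := fun h => ∑ i, w i * A.mulVec h i
          map_add' := fun a c => by
            simp [Matrix.mulVec_add, mul_add, Finset.sum_add_distrib]
          map_smul' := fun r a => by
            simp [Matrix.mulVec_smul, Finset.mul_sum, mul_comm, mul_assoc, mul_left_comm] }
      map_add' := fun w w' => by
        ext h; simp [add_mul, Finset.sum_add_distrib]
      map_smul' := fun r w => by
        ext h; simp [Finset.mul_sum, mul_assoc] }

lemma Lc_apply (A : Matrix (Fin m) (Fin n) ℝ) (w : Fin m → ℝ) (h : Fin n → ℝ) :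
    Lc A w h = ∑ i, w i * A.mulVec h i := rfl

end Setup

section Calc1
variable {m n : ℕ} (A : Matrix (Fin m) (Fin n) ℝ) (b : Fin m → ℝ) (lam : ℝ)

lemma Mm_posDef (hlam : 0 < lam) (y : Fin n → ℝ) : (Mm A b lam y).PosDef := by
  have h1 : (Aᵀ * (Matrix.diagonal (fun i => ddk A b y i ^ 2) * A)).PosSemidef := by
    have hd : (Matrix.diagonal (fun i => ddk A b y i ^ 2)).PosSemidef :=
      Matrix.PosSemidef.diagonal (fun i => sq_nonneg _)
    have := hd.conjTranspose_mul_mul_same A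
    rwa [Matrix.conjTranspose_eq_transpose_of_trivial, Matrix.mul_assoc] at this
  have h2 : (lam • (1 : Matrix (Fin n) (Fin n) ℝ)).PosDef := by
    have : lam • (1 : Matrix (Fin n) (Fin n) ℝ) = Matrix.diagonal (fun _ => lam) := by
      ext i j
      by_cases h : i = j <;> simp [Matrix.smul_apply, Matrix.one_apply, Matrix.diagonal_apply, h]
    rw [this]
    exact Matrix.PosDef.diagonal (fun _ => hlam)
  exact Matrix.PosDef.posSemidef_add h1 h2

lemma Mm_det_ne (hlam : 0 < lam) (y : Fin n → ℝ) : (Mm A b lam y).det ≠ 0 :=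
  ne_of_gt (Mm_posDef A b lam hlam y).det_pos

lemma Mm_mul_Nn (hlam : 0 < lam) (y : Fin n → ℝ) :
    Mm A b lam y * Nn A b lam y = 1 :=
  Matrix.mul_nonsing_inv _ (isUnit_iff_ne_zero.2 (Mm_det_ne A b lam hlam y))

lemma Nn_mul_Mm (hlam : 0 < lam) (y : Fin n → ℝ) :
    Nn A b lam y * Mm A b lam y = 1 :=
  Matrix.nonsing_inv_mul _ (isUnit_iff_ne_zero.2 (Mm_det_ne A b lam hlam y))

lemma Mm_transpose (y : Fin n → ℝ) : (Mm A b lam y)ᵀ = Mm A b lam y := by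
  unfold Mm
  rw [Matrix.transpose_add, Matrix.transpose_mul, Matrix.transpose_mul,
    Matrix.diagonal_transpose, Matrix.transpose_transpose, Matrix.transpose_smul,
    Matrix.transpose_one, Matrix.mul_assoc]

lemma Nn_transpose (y : Fin n → ℝ) : (Nn A b lam y)ᵀ = Nn A b lam y := by
  unfold Nn
  rw [Matrix.transpose_nonsing_inv, Mm_transpose]

lemma Nn_posSemidef (hlam : 0 < lam) (y : Fin n → ℝ) : (Nn A b lam y).PosSemidef :=
  ((Mm_posDef A b lam hlam y).posSemidef).inv

/-- derivative of the slack entries -/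
lemma hasFDerivAt_slk (i : Fin m) (y : Fin n → ℝ) :
    HasFDerivAt (fun y => slk A b y i) (uL A i) y := by
  have h1 : (fun y => slk A b y i) = fun y => uL A i y - b i := rfl
  rw [h1]
  exact (uL A i).hasFDerivAt.sub_const _

lemma hasFDerivAt_ddk (i : Fin m) (y : Fin n → ℝ) (hy : slk A b y i ≠ 0) :
    HasFDerivAt (fun y => ddk A b y i) ((-(ddk A b y i ^ 2)) • uL A i) y := by
  have h := (hasDerivAt_inv hy).comp_hasFDerivAt y (hasFDerivAt_slk A b i y)
  refine h.congr_fderiv ?_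
  unfold ddk
  rw [inv_pow]

lemma hasFDerivAt_ddk_sq (i : Fin m) (y : Fin n → ℝ) (hy : slk A b y i ≠ 0) :
    HasFDerivAt (fun y => ddk A b y i ^ 2) ((-2 * ddk A b y i ^ 3) • uL A i) y := by
  have h := (hasFDerivAt_ddk A b i y hy).fun_mul (hasFDerivAt_ddk A b i y hy)
  have h2 : (fun y => ddk A b y i * ddk A b y i) = fun y => ddk A b y i ^ 2 := by
    funext z; rw [pow_two]
  rw [h2] at h
  refine h.congr_fderiv ?_
  ext z
  simp only [ContinuousLinearMap.add_apply, ContinuousLinearMap.smul_apply, smul_eq_mul]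
  ring

lemma Mm_entry (y : Fin n → ℝ) (k l : Fin n) :
    Mm A b lam y k l = (∑ i, A i k * (ddk A b y i ^ 2 * A i l))
      + lam * (1 : Matrix (Fin n) (Fin n) ℝ) k l := by
  unfold Mm
  simp [Matrix.add_apply, Matrix.mul_apply, Matrix.diagonal_apply, Matrix.transpose_apply,
    Matrix.smul_apply, smul_eq_mul, ite_mul, zero_mul, Finset.sum_ite_eq]

lemma hasFDerivAt_Mm_entry (y : Fin n → ℝ) (hy : ∀ i, slk A b y i ≠ 0) (k l : Fin n) :
    HasFDerivAt (fun y => Mm A b lam y k l)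
      (∑ i : Fin m, (A i k * A i l * (-2 * ddk A b y i ^ 3)) • uL A i) y := by
  have hterm : ∀ i : Fin m, HasFDerivAt (fun y => A i k * (ddk A b y i ^ 2 * A i l))
      ((A i k * A i l * (-2 * ddk A b y i ^ 3)) • uL A i) y := by
    intro i
    have h := ((hasFDerivAt_ddk_sq A b i y (hy i)).mul_const (A i l)).const_mul (A i k)
    refine h.congr_fderiv ?_
    ext z
    simp only [ContinuousLinearMap.smul_apply, smul_eq_mul]
    ring
  have h1 : HasFDerivAt (fun y => ∑ i, A i k * (ddk A b y i ^ 2 * A i l))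
      (∑ i : Fin m, (A i k * A i l * (-2 * ddk A b y i ^ 3)) • uL A i) y :=
    HasFDerivAt.fun_sum (fun i _ => hterm i)
  have h2 : (fun y => Mm A b lam y k l)
      = fun y => (∑ i, A i k * (ddk A b y i ^ 2 * A i l))
        + lam * (1 : Matrix (Fin n) (Fin n) ℝ) k l := by
    funext z; exact Mm_entry A b lam z k l
  rw [h2]
  exact h1.add_const _
end Calc1

section Calc2
variable {m n : ℕ} (A : Matrix (Fin m) (Fin n) ℝ) (b : Fin m → ℝ) (lam : ℝ)

noncomputable def rowD (A : Matrix (Fin m) (Fin n) ℝ) (b : Fin m → ℝ)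
    (y : Fin n → ℝ) (k : Fin n) : (Fin n → ℝ) →L[ℝ] (Fin n → ℝ) :=
  ContinuousLinearMap.pi
    (fun l => ∑ i : Fin m, (A i k * A i l * (-2 * ddk A b y i ^ 3)) • uL A i)

noncomputable def EH (A : Matrix (Fin m) (Fin n) ℝ) (b : Fin m → ℝ)
    (y z : Fin n → ℝ) : Matrix (Fin n) (Fin n) ℝ :=
  Aᵀ * (Matrix.diagonal (fun i => -2 * ddk A b y i ^ 3 * A.mulVec z i) * A)

lemma rowD_apply (y z : Fin n → ℝ) (k l : Fin n) :
    rowD A b y k z l = EH A b y z k l := by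
  unfold rowD EH
  simp only [ContinuousLinearMap.pi_apply, ContinuousLinearMap.sum_apply,
    ContinuousLinearMap.smul_apply, smul_eq_mul, uL_apply, Matrix.mul_apply,
    Matrix.diagonal_apply, Matrix.transpose_apply, ite_mul, zero_mul, Finset.sum_ite_eq]
  simp only [Finset.mem_univ, if_true]
  exact Finset.sum_congr rfl fun i _ => by ring

lemma hasFDerivAt_Mm_row (y : Fin n → ℝ) (hy : ∀ i, slk A b y i ≠ 0) (k : Fin n) :
    HasFDerivAt (fun y => Mm A b lam y k) (rowD A b y k) y := by
  apply hasFDerivAt_pi''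
  intro l
  exact (hasFDerivAt_Mm_entry A b lam y hy k l).congr_fderiv (by rfl)

lemma trace_diag_mul {N : ℕ} (e : Fin N → ℝ) (Y : Matrix (Fin N) (Fin N) ℝ) :
    Matrix.trace (Matrix.diagonal e * Y) = ∑ i, e i * Y i i := by
  simp [Matrix.trace, Matrix.diag, Matrix.mul_apply, Matrix.diagonal_apply, ite_mul,
    zero_mul, Finset.sum_ite_eq]

lemma trace_mul_EH (y z : Fin n → ℝ) (X : Matrix (Fin n) (Fin n) ℝ) :
    Matrix.trace (X * EH A b y z)
      = ∑ i, (-2 * ddk A b y i ^ 3 * A.mulVec z i) * (A * X * Aᵀ) i i := by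
  unfold EH
  rw [← Matrix.mul_assoc, Matrix.trace_mul_comm, Matrix.mul_assoc, trace_diag_mul]
  refine Finset.sum_congr rfl fun i _ => ?_
  rw [← Matrix.mul_assoc]

lemma hasFDerivAt_FF (y : Fin n → ℝ) (hlam : 0 < lam) (hy : ∀ i, slk A b y i ≠ 0) :
    HasFDerivAt (FF A b lam) (Lc A (cv A b lam y)) y := by
  classical
  have hdet : HasFDerivAt (fun y => (Mm A b lam y).det)
      (∑ k : Fin n, ((cdet n).toContinuousLinearMap (fun j => Mm A b lam y j) k).comp
        (rowD A b y k)) y := by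
    have h := HasFDerivAt.multilinear_comp (f := cdet n)
      (g := fun k (y : Fin n → ℝ) => Mm A b lam y k)
      (g' := fun k => rowD A b y k) (x := y)
      (fun k => hasFDerivAt_Mm_row A b lam y hy k)
    exact h
  have hne := Mm_det_ne A b lam hlam y
  have hlog := (hdet.log hne).const_mul (1/2 : ℝ)
  refine hlog.congr_fderiv ?_
  ext z
  have hval : (∑ k : Fin n, ((cdet n).toContinuousLinearMap (fun j => Mm A b lam y j) k).comp
        (rowD A b y k)) z
      = Matrix.trace ((Mm A b lam y).adjugate * EH A b y z) := by
    rw [← sum_det_updateRow]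
    simp only [ContinuousLinearMap.sum_apply, ContinuousLinearMap.comp_apply,
      ContinuousMultilinearMap.toContinuousLinearMap_apply]
    refine Finset.sum_congr rfl fun k _ => ?_
    have h1 : Function.update (fun j => Mm A b lam y j) k (rowD A b y k z)
        = (Mm A b lam y).updateRow k (EH A b y z k) := by
      have h2 : rowD A b y k z = EH A b y z k := funext fun l => rowD_apply A b y z k l
      rw [h2]
      rfl
    rw [cdet_apply]
    congr 1
  have hadj : (Mm A b lam y).adjugate = (Mm A b lam y).det • Nn A b lam y := by
    unfold Nn
    rw [Matrix.inv_def, Ring.inverse_eq_inv, smul_smul, mul_inv_cancel₀ hne, one_smul]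
  simp only [ContinuousLinearMap.smul_apply, smul_eq_mul]
  rw [hval, hadj, Matrix.smul_mul, Matrix.trace_smul, smul_eq_mul, trace_mul_EH]
  rw [Lc_apply]
  have hcancel : ((Mm A b lam y).det)⁻¹ * ((Mm A b lam y).det
      * ∑ i, (-2 * ddk A b y i ^ 3 * A.mulVec z i) * (A * Nn A b lam y * Aᵀ) i i)
      = ∑ i, (-2 * ddk A b y i ^ 3 * A.mulVec z i) * (A * Nn A b lam y * Aᵀ) i i := by
    rw [← mul_assoc, inv_mul_cancel₀ hne, one_mul]
  rw [hcancel, Finset.mul_sum]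
  refine Finset.sum_congr rfl fun i _ => ?_
  unfold cv Gg
  ring
end Calc2

section Calc3
variable {m n : ℕ} (A : Matrix (Fin m) (Fin n) ℝ) (b : Fin m → ℝ) (lam : ℝ)

lemma diffAt_Mm_det (y : Fin n → ℝ) (hy : ∀ i, slk A b y i ≠ 0) :
    DifferentiableAt ℝ (fun y => (Mm A b lam y).det) y := by
  classical
  have h := HasFDerivAt.multilinear_comp (f := cdet n)
    (g := fun k (y : Fin n → ℝ) => Mm A b lam y k)
    (g' := fun k => rowD A b y k) (x := y)
    (fun k => hasFDerivAt_Mm_row A b lam y hy k)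
  exact h.differentiableAt

lemma diffAt_adj_entry (y : Fin n → ℝ) (hy : ∀ i, slk A b y i ≠ 0) (k l : Fin n) :
    DifferentiableAt ℝ (fun y => (Mm A b lam y).adjugate k l) y := by
  classical
  have h1 : (fun y => (Mm A b lam y).adjugate k l)
      = fun y => cdet n (Function.update (fun j => Mm A b lam y j) l (Pi.single k 1)) := by
    funext z
    rw [Matrix.adjugate_apply, cdet_apply]
    congr 1
  rw [h1]
  have hg : DifferentiableAt ℝ
      (fun y => Function.update (fun j => Mm A b lam y j) l (Pi.single k 1)) y := by
    rw [differentiableAt_pi]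
    intro j
    by_cases hj : j = l
    · subst hj
      simp only [Function.update_self]
      exact differentiableAt_const _
    · simp only [Function.update_of_ne hj]
      exact (hasFDerivAt_Mm_row A b lam y hy j).differentiableAt
  exact (((cdet n).hasFDerivAt _).differentiableAt).comp y hg

lemma Nn_entry (y : Fin n → ℝ) (k l : Fin n) :
    Nn A b lam y k l = ((Mm A b lam y).det)⁻¹ * (Mm A b lam y).adjugate k l := by
  unfold Nn
  rw [Matrix.inv_def, Ring.inverse_eq_inv]
  simp [Matrix.smul_apply, smul_eq_mul]

lemma diffAt_Nn_entry (y : Fin n → ℝ) (hlam : 0 < lam) (hy : ∀ i, slk A b y i ≠ 0)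
    (k l : Fin n) : DifferentiableAt ℝ (fun y => Nn A b lam y k l) y := by
  have h1 : (fun y => Nn A b lam y k l)
      = fun y => ((Mm A b lam y).det)⁻¹ * (Mm A b lam y).adjugate k l := by
    funext z; exact Nn_entry A b lam z k l
  rw [h1]
  exact ((diffAt_Mm_det A b lam y hy).inv (Mm_det_ne A b lam hlam y)).mul
    (diffAt_adj_entry A b lam y hy k l)

noncomputable def NH (A : Matrix (Fin m) (Fin n) ℝ) (b : Fin m → ℝ) (lam : ℝ)
    (x h : Fin n → ℝ) : Matrix (Fin n) (Fin n) ℝ :=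
  Matrix.of fun k l => fderiv ℝ (fun y => Nn A b lam y k l) x h

lemma entryD_apply (x z : Fin n → ℝ) (k l : Fin n) :
    (∑ i : Fin m, (A i k * A i l * (-2 * ddk A b x i ^ 3)) • uL A i) z
      = EH A b x z k l := by
  have := rowD_apply A b x z k l
  unfold rowD at this
  rw [ContinuousLinearMap.pi_apply] at this
  exact this

lemma entryD_apply' (x z : Fin n → ℝ) (k l : Fin n) :
    ∑ i : Fin m, A i k * A i l * (-2 * ddk A b x i ^ 3) * uL A i z
      = EH A b x z k l := by
  have h := entryD_apply A b x z k l
  simp only [ContinuousLinearMap.sum_apply, ContinuousLinearMap.smul_apply, smul_eq_mul] at h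
  exact h

lemma NH_eq (x : Fin n → ℝ) (hlam : 0 < lam) (hx : ∀ i, slk A b x i ≠ 0) (h : Fin n → ℝ) :
    NH A b lam x h = -(Nn A b lam x * (EH A b x h * Nn A b lam x)) := by
  classical
  -- entrywise identity from differentiating M * N = 1
  have hentry : ∀ k l : Fin n,
      (∑ j, (EH A b x h k j * Nn A b lam x j l
        + Mm A b lam x k j * NH A b lam x h j l)) = 0 := by
    intro k l
    have hF0 : (fun y => ∑ j, Mm A b lam y k j * Nn A b lam y j l)
        = fun _ => (1 : Matrix (Fin n) (Fin n) ℝ) k l := by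
      funext z
      have := Mm_mul_Nn A b lam hlam z
      calc ∑ j, Mm A b lam z k j * Nn A b lam z j l
          = (Mm A b lam z * Nn A b lam z) k l := (Matrix.mul_apply).symm
        _ = (1 : Matrix (Fin n) (Fin n) ℝ) k l := by rw [this]
    have hterm : ∀ j : Fin n, HasFDerivAt (fun y => Mm A b lam y k j * Nn A b lam y j l)
        ((Mm A b lam x k j) • (fderiv ℝ (fun y => Nn A b lam y j l) x)
          + (Nn A b lam x j l) • (∑ i : Fin m, (A i k * A i j * (-2 * ddk A b x i ^ 3)) • uL A i)) x :=
      fun j => (hasFDerivAt_Mm_entry A b lam x hx k j).mul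
        ((diffAt_Nn_entry A b lam x hlam hx j l).hasFDerivAt)
    have hsum : HasFDerivAt (fun y => ∑ j, Mm A b lam y k j * Nn A b lam y j l)
        (∑ j, ((Mm A b lam x k j) • (fderiv ℝ (fun y => Nn A b lam y j l) x)
          + (Nn A b lam x j l) • (∑ i : Fin m, (A i k * A i j * (-2 * ddk A b x i ^ 3)) • uL A i))) x :=
      HasFDerivAt.fun_sum (fun j _ => hterm j)
    have hzero : HasFDerivAt (fun y => ∑ j, Mm A b lam y k j * Nn A b lam y j l)
        (0 : (Fin n → ℝ) →L[ℝ] ℝ) x := by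
      rw [hF0]; exact hasFDerivAt_const _ _
    have huniq := hsum.unique hzero
    have := congrFun (congrArg (fun (L : (Fin n → ℝ) →L[ℝ] ℝ) => (L : (Fin n → ℝ) → ℝ)) huniq) h
    simp only [ContinuousLinearMap.sum_apply, ContinuousLinearMap.add_apply,
      ContinuousLinearMap.smul_apply, ContinuousLinearMap.zero_apply, smul_eq_mul] at this
    rw [← this]
    refine Finset.sum_congr rfl fun j _ => ?_
    rw [entryD_apply' A b x h k j]
    unfold NH
    simp only [Matrix.of_apply]
    ring
  have hmat : EH A b x h * Nn A b lam x + Mm A b lam x * NH A b lam x h = 0 := by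
    ext k l
    have hkl := hentry k l
    simp only [Matrix.add_apply, Matrix.mul_apply, Matrix.zero_apply, ← Finset.sum_add_distrib]
    exact hkl
  have hb : Mm A b lam x * NH A b lam x h = -(EH A b x h * Nn A b lam x) :=
    eq_neg_of_add_eq_zero_left (by rw [add_comm] at hmat; exact hmat)
  calc NH A b lam x h = 1 * NH A b lam x h := (one_mul _).symm
    _ = (Nn A b lam x * Mm A b lam x) * NH A b lam x h := by rw [Nn_mul_Mm A b lam hlam x]
    _ = Nn A b lam x * (Mm A b lam x * NH A b lam x h) := Matrix.mul_assoc _ _ _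
    _ = Nn A b lam x * (-(EH A b x h * Nn A b lam x)) := by rw [hb]
    _ = -(Nn A b lam x * (EH A b x h * Nn A b lam x)) := by rw [Matrix.mul_neg]

end Calc3

section Calc4
variable {m n : ℕ} (A : Matrix (Fin m) (Fin n) ℝ) (b : Fin m → ℝ) (lam : ℝ)

lemma Gg_entry (y : Fin n → ℝ) (i : Fin m) :
    Gg A b lam y i i = ∑ l, (∑ k, A i k * Nn A b lam y k l) * A i l := by
  unfold Gg
  simp [Matrix.mul_apply, Matrix.transpose_apply]

noncomputable def DG (A : Matrix (Fin m) (Fin n) ℝ) (b : Fin m → ℝ) (lam : ℝ)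
    (x : Fin n → ℝ) (i : Fin m) : (Fin n → ℝ) →L[ℝ] ℝ :=
  ∑ l, (A i l) • (∑ k, (A i k) • fderiv ℝ (fun y => Nn A b lam y k l) x)

lemma hasFDerivAt_Gg (x : Fin n → ℝ) (hlam : 0 < lam) (hx : ∀ i, slk A b x i ≠ 0)
    (i : Fin m) : HasFDerivAt (fun y => Gg A b lam y i i) (DG A b lam x i) x := by
  have h1 : (fun y => Gg A b lam y i i)
      = fun y => ∑ l, (∑ k, A i k * Nn A b lam y k l) * A i l := by
    funext z; exact Gg_entry A b lam z i
  rw [h1]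
  refine HasFDerivAt.fun_sum (fun l _ => ?_)
  have hin : HasFDerivAt (fun y => ∑ k, A i k * Nn A b lam y k l)
      (∑ k, (A i k) • fderiv ℝ (fun y => Nn A b lam y k l) x) x :=
    HasFDerivAt.fun_sum (fun k _ =>
      ((diffAt_Nn_entry A b lam x hlam hx k l).hasFDerivAt).const_mul (A i k))
  exact hin.mul_const (A i l)

lemma DG_apply (x : Fin n → ℝ) (i : Fin m) (h : Fin n → ℝ) :
    DG A b lam x i h = (A * NH A b lam x h * Aᵀ) i i := by
  unfold DG NH
  simp only [ContinuousLinearMap.sum_apply, ContinuousLinearMap.smul_apply, smul_eq_mul,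
    Matrix.mul_apply, Matrix.transpose_apply, Matrix.of_apply]
  refine Finset.sum_congr rfl fun l _ => ?_
  rw [Finset.mul_sum, Finset.sum_mul]
  exact Finset.sum_congr rfl fun k _ => by ring

noncomputable def Dcv (A : Matrix (Fin m) (Fin n) ℝ) (b : Fin m → ℝ) (lam : ℝ)
    (x : Fin n → ℝ) (i : Fin m) : (Fin n → ℝ) →L[ℝ] ℝ :=
  (-(ddk A b x i ^ 3)) • DG A b lam x i
    + (Gg A b lam x i i) • ((3 * ddk A b x i ^ 4) • uL A i)

lemma hasFDerivAt_neg_dd3 (x : Fin n → ℝ) (i : Fin m) (hi : slk A b x i ≠ 0) :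
    HasFDerivAt (fun y => -(ddk A b y i ^ 3)) ((3 * ddk A b x i ^ 4) • uL A i) x := by
  have h2 := (hasFDerivAt_ddk_sq A b i x hi).fun_mul (hasFDerivAt_ddk A b i x hi)
  have h3 : (fun y => ddk A b y i ^ 2 * ddk A b y i) = fun y => ddk A b y i ^ 3 := by
    funext z; ring
  rw [h3] at h2
  have h4 := h2.neg
  refine h4.congr_fderiv ?_
  ext z
  simp only [ContinuousLinearMap.neg_apply, ContinuousLinearMap.add_apply,
    ContinuousLinearMap.smul_apply, smul_eq_mul]
  ring

lemma hasFDerivAt_cv (x : Fin n → ℝ) (hlam : 0 < lam) (hx : ∀ i, slk A b x i ≠ 0)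
    (i : Fin m) : HasFDerivAt (fun y => cv A b lam y i) (Dcv A b lam x i) x := by
  have h := (hasFDerivAt_neg_dd3 A b x i (hx i)).mul (hasFDerivAt_Gg A b lam x hlam hx i)
  refine h.congr_fderiv ?_
  unfold Dcv
  ext z
  simp only [ContinuousLinearMap.add_apply, ContinuousLinearMap.smul_apply, smul_eq_mul]
  try ring

lemma hess_FF (x : Fin n → ℝ) (hlam : 0 < lam) (hx : ∀ i, slk A b x i ≠ 0) (h : Fin n → ℝ) :
    fderiv ℝ (fderiv ℝ (FF A b lam)) x h h
      = ∑ i, (-(ddk A b x i ^ 3) * ((A * NH A b lam x h * Aᵀ) i i)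
          + Gg A b lam x i i * (3 * ddk A b x i ^ 4 * A.mulVec h i)) * A.mulVec h i := by
  classical
  have hUopen : IsOpen {y : Fin n → ℝ | ∀ i, slk A b y i ≠ 0} := by
    have : {y : Fin n → ℝ | ∀ i, slk A b y i ≠ 0}
        = ⋂ i, (fun y => slk A b y i) ⁻¹' ({0}ᶜ) := by
      ext y; simp [Set.mem_iInter]
    rw [this]
    refine isOpen_iInter_of_finite fun i => ?_
    have hc : Continuous (fun y => slk A b y i) := by
      have : (fun y => slk A b y i) = fun y => uL A i y - b i := rfl
      rw [this]
      exact (uL A i).continuous.sub continuous_const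
    exact isOpen_compl_singleton.preimage hc
  have hxU : x ∈ {y : Fin n → ℝ | ∀ i, slk A b y i ≠ 0} := hx
  have hFF_ev : fderiv ℝ (FF A b lam) =ᶠ[nhds x] fun y => Lc A (cv A b lam y) :=
    Filter.eventually_of_mem (hUopen.mem_nhds hxU)
      (fun y hy => (hasFDerivAt_FF A b lam y hlam hy).fderiv)
  have hφ : HasFDerivAt (fun y => Lc A (cv A b lam y))
      ((Lc A).comp (ContinuousLinearMap.pi (fun i => Dcv A b lam x i))) x :=
    (Lc A).hasFDerivAt.comp x (hasFDerivAt_pi.2 (fun i => hasFDerivAt_cv A b lam x hlam hx i))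
  have heq : fderiv ℝ (fderiv ℝ (FF A b lam)) x
      = (Lc A).comp (ContinuousLinearMap.pi (fun i => Dcv A b lam x i)) := by
    rw [hFF_ev.fderiv_eq, hφ.fderiv]
  rw [heq]
  simp only [ContinuousLinearMap.comp_apply, ContinuousLinearMap.pi_apply, Lc_apply]
  refine Finset.sum_congr rfl fun i _ => ?_
  unfold Dcv
  simp only [ContinuousLinearMap.add_apply, ContinuousLinearMap.smul_apply, smul_eq_mul,
    DG_apply, uL_apply]
  try ring

end Calc4

section Alg
variable {m n : ℕ} (A : Matrix (Fin m) (Fin n) ℝ) (b : Fin m → ℝ) (lam : ℝ)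

noncomputable def Bx (A : Matrix (Fin m) (Fin n) ℝ) (b : Fin m → ℝ) (x : Fin n → ℝ) :
    Matrix (Fin m) (Fin n) ℝ := Matrix.diagonal (ddk A b x) * A

noncomputable def Pm (A : Matrix (Fin m) (Fin n) ℝ) (b : Fin m → ℝ) (lam : ℝ)
    (x : Fin n → ℝ) : Matrix (Fin m) (Fin m) ℝ :=
  Bx A b x * Nn A b lam x * (Bx A b x)ᵀ

lemma Bx_transpose (x : Fin n → ℝ) :
    (Bx A b x)ᵀ = Aᵀ * Matrix.diagonal (ddk A b x) := by
  unfold Bx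
  rw [Matrix.transpose_mul, Matrix.diagonal_transpose]

lemma Pm_eq_dGd (x : Fin n → ℝ) :
    Pm A b lam x = Matrix.diagonal (ddk A b x) * Gg A b lam x * Matrix.diagonal (ddk A b x) := by
  unfold Pm Gg
  rw [Bx_transpose]
  unfold Bx
  simp only [Matrix.mul_assoc]

lemma Pm_entry (x : Fin n → ℝ) (i j : Fin m) :
    Pm A b lam x i j = ddk A b x i * ddk A b x j * Gg A b lam x i j := by
  rw [Pm_eq_dGd]
  rw [Matrix.mul_diagonal, Matrix.diagonal_mul]
  ring

lemma Pm_transpose (x : Fin n → ℝ) : (Pm A b lam x)ᵀ = Pm A b lam x := by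
  unfold Pm
  rw [Matrix.transpose_mul, Matrix.transpose_mul, Matrix.transpose_transpose,
    Nn_transpose, Matrix.mul_assoc]

lemma BxT_Bx (x : Fin n → ℝ) :
    (Bx A b x)ᵀ * Bx A b x
      = Aᵀ * (Matrix.diagonal (fun i => ddk A b x i ^ 2) * A) := by
  rw [Bx_transpose]
  unfold Bx
  have h1 : Matrix.diagonal (ddk A b x) * Matrix.diagonal (ddk A b x)
      = Matrix.diagonal (fun i => ddk A b x i ^ 2) := by
    rw [Matrix.diagonal_mul_diagonal]
    simp only [pow_two]
  calc Aᵀ * Matrix.diagonal (ddk A b x) * (Matrix.diagonal (ddk A b x) * A)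
      = Aᵀ * (Matrix.diagonal (ddk A b x) * Matrix.diagonal (ddk A b x)) * A := by
        simp only [Matrix.mul_assoc]
    _ = Aᵀ * Matrix.diagonal (fun i => ddk A b x i ^ 2) * A := by rw [h1]
    _ = Aᵀ * (Matrix.diagonal (fun i => ddk A b x i ^ 2) * A) := by rw [Matrix.mul_assoc]

lemma Mm_eq_BB (x : Fin n → ℝ) :
    Mm A b lam x = (Bx A b x)ᵀ * Bx A b x + lam • 1 := by
  rw [BxT_Bx]
  rfl

lemma diag_slk_inv (y : Fin n → ℝ) (hy : ∀ i, slk A b y i ≠ 0) :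
    (Matrix.diagonal (slk A b y))⁻¹ = Matrix.diagonal (ddk A b y) := by
  refine Matrix.inv_eq_right_inv ?_
  rw [Matrix.diagonal_mul_diagonal]
  ext i j
  by_cases h : i = j
  · subst h
    simp [Matrix.diagonal_apply, Matrix.one_apply, mul_inv_cancel₀ (hy i), ddk]
  · simp [Matrix.diagonal_apply, Matrix.one_apply, h]

lemma Amat_eq (y : Fin n → ℝ) (hy : ∀ i, slk A b y i ≠ 0) :
    Amat A b y = Bx A b y := by
  unfold Amat Bx
  rw [show A.mulVec y - b = slk A b y from rfl, diag_slk_inv A b y hy]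

lemma AmatM_eq (y : Fin n → ℝ) (hy : ∀ i, slk A b y i ≠ 0) :
    (Amat A b y)ᵀ * Amat A b y + lam • (1 : Matrix (Fin n) (Fin n) ℝ) = Mm A b lam y := by
  rw [Amat_eq A b y hy, Mm_eq_BB, BxT_Bx]

lemma vb_eq (y : Fin n → ℝ) (hy : ∀ i, slk A b y i ≠ 0) :
    volBarrier A b lam y = FF A b lam y := by
  unfold volBarrier FF
  rw [AmatM_eq A b lam y hy]

lemma psi_eq (x : Fin n → ℝ) (hy : ∀ i, slk A b x i ≠ 0) (i : Fin m) :
    psiReg A b lam x i = Pm A b lam x i i := by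
  unfold psiReg
  rw [AmatM_eq A b lam x hy, Amat_eq A b x hy]
  rfl

lemma Bx_mulVec (x h : Fin n → ℝ) (i : Fin m) :
    (Bx A b x).mulVec h i = ddk A b x i * A.mulVec h i := by
  unfold Bx
  rw [← Matrix.mulVec_mulVec, Matrix.mulVec_diagonal]

lemma quadform_eq (x h : Fin n → ℝ) (hy : ∀ i, slk A b x i ≠ 0) :
    h ⬝ᵥ ((Amat A b x)ᵀ * Matrix.diagonal (psiReg A b lam x) * Amat A b x).mulVec h
      = ∑ i, Pm A b lam x i i * ((Bx A b x).mulVec h i) ^ 2 := by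
  rw [Amat_eq A b x hy]
  have e1 : ((Bx A b x)ᵀ * Matrix.diagonal (psiReg A b lam x) * Bx A b x).mulVec h
      = (Bx A b x)ᵀ.mulVec ((Matrix.diagonal (psiReg A b lam x)).mulVec
          ((Bx A b x).mulVec h)) := by
    rw [Matrix.mulVec_mulVec, Matrix.mulVec_mulVec, Matrix.mul_assoc]
  rw [e1, Matrix.dotProduct_mulVec, Matrix.vecMul_transpose]
  unfold dotProduct
  refine Finset.sum_congr rfl fun i _ => ?_
  rw [Matrix.mulVec_diagonal, psi_eq A b lam x hy]
  ring

end Alg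

section PForm
variable {m n : ℕ} (A : Matrix (Fin m) (Fin n) ℝ) (b : Fin m → ℝ) (lam : ℝ)

lemma AN_EH (x z : Fin n → ℝ) :
    A * (Nn A b lam x * (EH A b x z * Nn A b lam x)) * Aᵀ
      = Gg A b lam x * (Matrix.diagonal (fun i => -2 * ddk A b x i ^ 3 * A.mulVec z i)
          * Gg A b lam x) := by
  unfold EH Gg
  simp only [Matrix.mul_assoc]

lemma GdG_entry (x : Fin n → ℝ) (e : Fin m → ℝ) (i : Fin m) :
    (Gg A b lam x * (Matrix.diagonal e * Gg A b lam x)) i i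
      = ∑ j, Gg A b lam x i j * (e j * Gg A b lam x j i) := by
  rw [Matrix.mul_apply]
  refine Finset.sum_congr rfl fun j _ => ?_
  rw [Matrix.diagonal_mul]

lemma hess_P_form (x : Fin n → ℝ) (hlam : 0 < lam) (hx : ∀ i, slk A b x i ≠ 0)
    (h : Fin n → ℝ) :
    fderiv ℝ (fderiv ℝ (FF A b lam)) x h h
      = 3 * (∑ i, ((Bx A b x).mulVec h i) ^ 2 * Pm A b lam x i i)
        - 2 * (∑ i, ∑ j, ((Bx A b x).mulVec h i) * ((Bx A b x).mulVec h j)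
            * (Pm A b lam x i j * Pm A b lam x j i)) := by
  rw [hess_FF A b lam x hlam hx h]
  have hNH : ∀ i : Fin m, (A * NH A b lam x h * Aᵀ) i i
      = -∑ j, Gg A b lam x i j * ((-2 * ddk A b x j ^ 3 * A.mulVec h j) * Gg A b lam x j i) := by
    intro i
    rw [NH_eq A b lam x hlam hx h]
    have : A * -(Nn A b lam x * (EH A b x h * Nn A b lam x)) * Aᵀ
        = -(A * (Nn A b lam x * (EH A b x h * Nn A b lam x)) * Aᵀ) := by
      rw [Matrix.mul_neg, Matrix.neg_mul]
    rw [this, AN_EH, Matrix.neg_apply, GdG_entry]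
  have hrw : (∑ i, (-(ddk A b x i ^ 3) * ((A * NH A b lam x h * Aᵀ) i i)
          + Gg A b lam x i i * (3 * ddk A b x i ^ 4 * A.mulVec h i)) * A.mulVec h i)
      = ∑ i, (3 * (((Bx A b x).mulVec h i) ^ 2 * Pm A b lam x i i)
          - ∑ j, 2 * (((Bx A b x).mulVec h i) * ((Bx A b x).mulVec h j)
            * (Pm A b lam x i j * Pm A b lam x j i))) := by
    refine Finset.sum_congr rfl fun i _ => ?_
    rw [hNH i]
    have hT : (∑ j, 2 * (((Bx A b x).mulVec h i) * ((Bx A b x).mulVec h j)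
          * (Pm A b lam x i j * Pm A b lam x j i)))
        = -((ddk A b x i ^ 3)
            * (∑ j, Gg A b lam x i j * ((-2 * ddk A b x j ^ 3 * A.mulVec h j)
                * Gg A b lam x j i)) * A.mulVec h i) := by
      rw [Finset.mul_sum, Finset.sum_mul, ← Finset.sum_neg_distrib]
      refine Finset.sum_congr rfl fun j _ => ?_
      simp only [Bx_mulVec, Pm_entry]
      ring
    rw [hT]
    simp only [Bx_mulVec, Pm_entry]
    ring
  rw [hrw, Finset.sum_sub_distrib]
  simp [Finset.mul_sum]

end PForm

section PSDIneq
variable {m n : ℕ} (A : Matrix (Fin m) (Fin n) ℝ) (b : Fin m → ℝ) (lam : ℝ)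

lemma Pm_posSemidef (x : Fin n → ℝ) (hlam : 0 < lam) : (Pm A b lam x).PosSemidef := by
  have h := (Nn_posSemidef A b lam hlam x).mul_mul_conjTranspose_same (Bx A b x)
  rwa [Matrix.conjTranspose_eq_transpose_of_trivial] at h

lemma dotProduct_self_nonneg' (v : Fin m → ℝ) : 0 ≤ v ⬝ᵥ v :=
  Finset.sum_nonneg fun i _ => mul_self_nonneg _

lemma one_sub_Pm_psd (x : Fin n → ℝ) (hlam : 0 < lam) :
    ((1 : Matrix (Fin m) (Fin m) ℝ) - Pm A b lam x).PosSemidef := by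
  rw [Matrix.posSemidef_iff_dotProduct_mulVec]
  constructor
  · exact Matrix.isHermitian_one.sub (Pm_posSemidef A b lam x hlam).isHermitian
  · intro z
    have hstar : star z = z := by funext i; exact star_trivial _
    rw [hstar, Matrix.sub_mulVec, Matrix.one_mulVec, dotProduct_sub, sub_nonneg]
    set w : Fin n → ℝ := (Bx A b x)ᵀ.mulVec z with hw
    set q : Fin n → ℝ := (Nn A b lam x).mulVec w with hq
    set r : Fin m → ℝ := (Bx A b x).mulVec q with hr
    have e1 : (Pm A b lam x).mulVec z = r := by
      rw [hr, hq, hw]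
      unfold Pm
      rw [Matrix.mulVec_mulVec, Matrix.mulVec_mulVec]
    have e3 : w = (Mm A b lam x).mulVec q := by
      rw [hq, Matrix.mulVec_mulVec, Mm_mul_Nn A b lam hlam x, Matrix.one_mulVec]
    have e5 : z ⬝ᵥ r = r ⬝ᵥ r + lam * (q ⬝ᵥ q) := by
      have s1 : z ⬝ᵥ r = w ⬝ᵥ q := by
        rw [hr, Matrix.dotProduct_mulVec, hw, Matrix.mulVec_transpose]
      have s2 : w ⬝ᵥ q = r ⬝ᵥ r + lam * (q ⬝ᵥ q) := by
        rw [e3, Mm_eq_BB, Matrix.add_mulVec, add_dotProduct]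
        have t1 : ((Bx A b x)ᵀ * Bx A b x).mulVec q ⬝ᵥ q = r ⬝ᵥ r := by
          rw [← Matrix.mulVec_mulVec, ← hr, Matrix.mulVec_transpose,
            ← Matrix.dotProduct_mulVec, ← hr]
        have t2 : ((lam • (1 : Matrix (Fin n) (Fin n) ℝ)).mulVec q) ⬝ᵥ q
            = lam * (q ⬝ᵥ q) := by
          rw [Matrix.smul_mulVec, Matrix.one_mulVec, smul_dotProduct,
            smul_eq_mul]
        rw [t1, t2]
      rw [s1, s2]
    have hcs : (z ⬝ᵥ r) ^ 2 ≤ (z ⬝ᵥ z) * (r ⬝ᵥ r) := by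
      have h := Finset.sum_mul_sq_le_sq_mul_sq Finset.univ z r
      have hzz : ∑ i, z i ^ 2 = z ⬝ᵥ z := by
        refine Finset.sum_congr rfl fun i _ => ?_; rw [pow_two]
      have hrr : ∑ i, r i ^ 2 = r ⬝ᵥ r := by
        refine Finset.sum_congr rfl fun i _ => ?_; rw [pow_two]
      rw [hzz, hrr] at h
      exact h
    rw [e1]
    have hz := dotProduct_self_nonneg' z
    have hr' := dotProduct_self_nonneg' r
    have hq' := dotProduct_self_nonneg' (m := n) q
    nlinarith [hcs, e5, hz, hr', hq', hlam,
      mul_nonneg (mul_nonneg hz hlam.le) hq']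

lemma trace_pair {k : ℕ} (X Y : Matrix (Fin k) (Fin k) ℝ) :
    Matrix.trace (X * Y) = ∑ i, ∑ j, X i j * Y j i := by
  simp [Matrix.trace, Matrix.diag, Matrix.mul_apply]

lemma S2_eq_trace (x : Fin n → ℝ) (v : Fin m → ℝ) :
    ∑ i, ∑ j, v i * v j * (Pm A b lam x i j * Pm A b lam x j i)
      = Matrix.trace ((Matrix.diagonal v * Pm A b lam x)
          * (Matrix.diagonal v * Pm A b lam x)) := by
  rw [trace_pair]
  refine Finset.sum_congr rfl fun i _ => Finset.sum_congr rfl fun j _ => ?_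
  rw [Matrix.diagonal_mul, Matrix.diagonal_mul]
  ring

open scoped MatrixOrder in
lemma S2_nonneg (x : Fin n → ℝ) (hlam : 0 < lam) (v : Fin m → ℝ) :
    0 ≤ ∑ i, ∑ j, v i * v j * (Pm A b lam x i j * Pm A b lam x j i) := by
  have hP := Pm_posSemidef A b lam x hlam
  set P := Pm A b lam x with hPdef
  set R := CFC.sqrt P with hRdef
  have hRR : R * R = P := CFC.sqrt_mul_sqrt_self P hP.nonneg
  have hRsym : Rᵀ = R := by
    have h : (R)ᴴ = R := (CFC.sqrt_nonneg P).posSemidef.isHermitian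
    rwa [Matrix.conjTranspose_eq_transpose_of_trivial] at h
  have hP2 : ∀ Y : Matrix (Fin m) (Fin m) ℝ, R * (R * Y) = P * Y := fun Y => by
    rw [← Matrix.mul_assoc, hRR]
  set D := Matrix.diagonal v with hDdef
  set X := R * (D * R) with hXdef
  have hXsym : Xᵀ = X := by
    rw [hXdef, Matrix.transpose_mul, Matrix.transpose_mul, Matrix.diagonal_transpose,
      hRsym, Matrix.mul_assoc]
  have e2 : ((D * R) * (R * (D * R))) * R = (D * P) * (D * P) := by
    simp only [Matrix.mul_assoc, hP2, hRR]
  have key : Matrix.trace ((D * P) * (D * P)) = Matrix.trace (Xᵀ * X) := by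
    rw [hXsym, hXdef, ← e2, Matrix.mul_assoc, ← Matrix.trace_mul_comm, Matrix.mul_assoc]
  rw [S2_eq_trace, ← hPdef, ← hDdef, key]
  exact trace_transpose_mul_self_nonneg X

open scoped MatrixOrder in
lemma S2_le_S1 (x : Fin n → ℝ) (hlam : 0 < lam) (v : Fin m → ℝ) :
    ∑ i, ∑ j, v i * v j * (Pm A b lam x i j * Pm A b lam x j i)
      ≤ ∑ i, v i ^ 2 * Pm A b lam x i i := by
  have hP := Pm_posSemidef A b lam x hlam
  set P := Pm A b lam x with hPdef
  set R := CFC.sqrt P with hRdef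
  have hRR : R * R = P := CFC.sqrt_mul_sqrt_self P hP.nonneg
  have hRsym : Rᵀ = R := by
    have h : (R)ᴴ = R := (CFC.sqrt_nonneg P).posSemidef.isHermitian
    rwa [Matrix.conjTranspose_eq_transpose_of_trivial] at h
  have hP2 : ∀ Y : Matrix (Fin m) (Fin m) ℝ, R * (R * Y) = P * Y := fun Y => by
    rw [← Matrix.mul_assoc, hRR]
  set D := Matrix.diagonal v with hDdef
  have hDsym : Dᵀ = D := Matrix.diagonal_transpose v
  have hK : (D * ((1 : Matrix (Fin m) (Fin m) ℝ) - P) * Dᴴ).PosSemidef :=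
    (one_sub_Pm_psd A b lam x hlam).mul_mul_conjTranspose_same D
  have hDH : (Dᴴ : Matrix (Fin m) (Fin m) ℝ) = D := by
    rw [Matrix.conjTranspose_eq_transpose_of_trivial, hDsym]
  rw [hDH] at hK
  have hT : (R * (D * ((1 : Matrix (Fin m) (Fin m) ℝ) - P) * D) * Rᴴ).PosSemidef :=
    hK.mul_mul_conjTranspose_same R
  have hRH : (Rᴴ : Matrix (Fin m) (Fin m) ℝ) = R := by
    rw [Matrix.conjTranspose_eq_transpose_of_trivial, hRsym]
  rw [hRH] at hT
  have htr := psd_trace_nonneg hT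
  have hsplit : R * (D * ((1 : Matrix (Fin m) (Fin m) ℝ) - P) * D) * R
      = R * (D * D) * R - R * (D * (P * D)) * R := by noncomm_ring
  rw [hsplit, Matrix.trace_sub, sub_nonneg] at htr
  have tA : Matrix.trace (R * (D * D) * R) = ∑ i, v i ^ 2 * P i i := by
    have e : Matrix.trace (R * (D * D) * R) = Matrix.trace ((D * D) * P) := by
      rw [Matrix.mul_assoc, ← Matrix.trace_mul_comm]
      simp only [Matrix.mul_assoc, hP2, hRR]
    rw [e, hDdef, Matrix.diagonal_mul_diagonal, trace_diag_mul]
    exact Finset.sum_congr rfl fun i _ => by rw [pow_two]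
  have tB : Matrix.trace (R * (D * (P * D)) * R) = Matrix.trace ((D * (P * D)) * P) := by
    rw [Matrix.mul_assoc, ← Matrix.trace_mul_comm]
    simp only [Matrix.mul_assoc, hP2, hRR]
  have tB2 : Matrix.trace ((D * (P * D)) * P)
      = ∑ i, ∑ j, v i * v j * (P i j * P j i) := by
    rw [trace_pair]
    refine Finset.sum_congr rfl fun i _ => Finset.sum_congr rfl fun j _ => ?_
    rw [hDdef, Matrix.diagonal_mul, Matrix.mul_diagonal]
    ring
  rw [tA, tB, tB2] at htr
  exact htr

end PSDIneq


/-- Hessian bounds for the regularized volumetric barrier: at a strictly feasible point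
`x`, for every direction `h`,
`hᵀ(A_xᵀΨ(x)A_x)h ≤ D²f(x)[h,h] ≤ 3·hᵀ(A_xᵀΨ(x)A_x)h`, i.e.
`A_xᵀΨ(x)A_x ⪯ ∇²f(x) ⪯ 3·A_xᵀΨ(x)A_x`. -/
theorem stmt17 (m n : ℕ) (A : Matrix (Fin m) (Fin n) ℝ) (b : Fin m → ℝ)
    (lam : ℝ) (hlam : 0 < lam)
    (x : Fin n → ℝ) (hx : ∀ i, 0 < (A.mulVec x - b) i) :
    ∀ h : Fin n → ℝ,
      h ⬝ᵥ ((Amat A b x)ᵀ * Matrix.diagonal (psiReg A b lam x) * Amat A b x).mulVec h ≤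
          iteratedFDeriv ℝ 2 (volBarrier A b lam) x ![h, h] ∧
        iteratedFDeriv ℝ 2 (volBarrier A b lam) x ![h, h] ≤
          3 * (h ⬝ᵥ ((Amat A b x)ᵀ * Matrix.diagonal (psiReg A b lam x) *
            Amat A b x).mulVec h) := by
  intro h
  have hx0 : ∀ i, 0 < slk A b x i := hx
  have hx' : ∀ i, slk A b x i ≠ 0 := fun i => ne_of_gt (hx0 i)
  -- replace volBarrier by FF in the second derivative
  have hUopen : IsOpen {y : Fin n → ℝ | ∀ i, 0 < slk A b y i} := by
    have heq : {y : Fin n → ℝ | ∀ i, 0 < slk A b y i}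
        = ⋂ i, (fun y => slk A b y i) ⁻¹' (Set.Ioi 0) := by
      ext y; simp [Set.mem_iInter]
    rw [heq]
    refine isOpen_iInter_of_finite fun i => ?_
    have hc : Continuous (fun y => slk A b y i) := by
      have : (fun y => slk A b y i) = fun y => uL A i y - b i := rfl
      rw [this]
      exact (uL A i).continuous.sub continuous_const
    exact isOpen_Ioi.preimage hc
  have hvb_ev : volBarrier A b lam =ᶠ[nhds x] FF A b lam :=
    Filter.eventually_of_mem (hUopen.mem_nhds hx0)
      (fun y hy => vb_eq A b lam y (fun i => ne_of_gt (hy i)))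
  have h2 : iteratedFDeriv ℝ 2 (volBarrier A b lam) x ![h, h]
      = fderiv ℝ (fderiv ℝ (FF A b lam)) x h h := by
    rw [iteratedFDeriv_two_apply]
    have e : fderiv ℝ (volBarrier A b lam) =ᶠ[nhds x] fderiv ℝ (FF A b lam) :=
      hvb_ev.fderiv
    rw [e.fderiv_eq]
    simp
  set v : Fin m → ℝ := (Bx A b x).mulVec h with hv
  have hQ : h ⬝ᵥ ((Amat A b x)ᵀ * Matrix.diagonal (psiReg A b lam x)
      * Amat A b x).mulVec h = ∑ i, Pm A b lam x i i * v i ^ 2 :=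
    quadform_eq A b lam x h hx'
  have hPform : fderiv ℝ (fderiv ℝ (FF A b lam)) x h h
      = 3 * (∑ i, v i ^ 2 * Pm A b lam x i i)
        - 2 * (∑ i, ∑ j, v i * v j * (Pm A b lam x i j * Pm A b lam x j i)) :=
    hess_P_form A b lam x hlam hx' h
  have hcomm : ∑ i, Pm A b lam x i i * v i ^ 2 = ∑ i, v i ^ 2 * Pm A b lam x i i :=
    Finset.sum_congr rfl fun i _ => mul_comm _ _
  have hs2nn := S2_nonneg A b lam x hlam v
  have hs2le := S2_le_S1 A b lam x hlam v
  constructor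
  · rw [hQ, h2, hPform, hcomm]
    linarith
  · rw [hQ, h2, hPform, hcomm]
    linarith
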